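/- Let N be a (1,1)-tensor field on a manifold M with vanishing Nijenhuis torsion, i.e. [NW, NX] = N[NW, X] + N[W, NX] - N²[W, X] for all vector fields W, X. If Z is a vector field with Lie_Z N = Id (the identity endomorphism), then the vector field Y₀ = NZ satisfies Lie_{Y₀} N = N, i.e. Y₀ is a conformal symmetry of N. -/
import Mathlib

/-- If `N` is a (1,1)-tensor with vanishing Nijenhuis torsion and `Z` is a
vector field with `Lie_Z N = Id`, then `Y₀ = NZ` is a conformal symmetry: `Lie_{Y₀} N = N`.
Vector fields are modelled as a Lie algebra `X` over `ℝ`, the (1,1)-tensor as an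
`ℝ`-linear endomorphism, and `(Lie_Y N)(V) = ⁅Y, N V⁆ - N ⁅Y, V⁆`. -/
theorem stmt1 (X : Type*) [LieRing X] [LieAlgebra ℝ X]
    (N : X →ₗ[ℝ] X) (Z : X)
    -- vanishing Nijenhuis torsion
    (htorsion : ∀ W V : X, ⁅N W, N V⁆ = N ⁅N W, V⁆ + N ⁅W, N V⁆ - N (N ⁅W, V⁆))
    -- Lie_Z N = Id
    (hZ : ∀ V : X, ⁅Z, N V⁆ - N ⁅Z, V⁆ = V) :
    -- Lie_{NZ} N = N
    ∀ V : X, ⁅N Z, N V⁆ - N ⁅N Z, V⁆ = N V := by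
  intro V
  have := hZ V
  rw [htorsion Z V]
  have : N ⁅Z, N V⁆ - N (N ⁅Z, V⁆) = N V := by
    rw [← map_sub, hZ V]
  abel_nf
  abel_nf at this
  linear_combination (norm := abel) this
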